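/- arXiv:2501.13226 — 7 statements merged into one kernel-verified Lean document; each statement's English description precedes it below -/
import Mathlib

section
/- Define the value iteration operator: V_{t+1}(s) = min{V_t^0(s), V_t^1(s), V_t^2(s)} where V_t^0(s) = s + r·V_t(s+1) + (1-r)·V_t(0), V_t^1(s) = s + λ₁ + (1-ρp)r·V_t(s+1) + ((1-ρp)(1-r)+ρp)·V_t(0), V_t^2(s) = s + λ₂ + (1-ρq)r·V_t(s+1) + ((1-ρq)(1-r)+ρq)·V_t(0), with r = (1-r₀) if s = 0 and r = r₁ if s > 0. If V_t : ℕ → ℝ is monotone increasing, V₀ = 0, r₀, r₁, ρ, p, q ∈ [0,1], r₀ + r₁ ≥ 1, and λ₁, λ₂ ≥ 0, then V_{t+1} is monotone increasing. -/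
/-- One step of relative value iteration for the AoSI MDP preserves monotonicity. -/
theorem aosi_value_iteration_step_monotone
    (r₀ r₁ ρ p q lam₁ lam₂ : ℝ)
    (hr₀ : r₀ ∈ Set.Icc (0:ℝ) 1) (hr₁ : r₁ ∈ Set.Icc (0:ℝ) 1)
    (hρ : ρ ∈ Set.Icc (0:ℝ) 1) (hp : p ∈ Set.Icc (0:ℝ) 1) (hq : q ∈ Set.Icc (0:ℝ) 1)
    (hsum : 1 ≤ r₀ + r₁) (hlam₁ : 0 ≤ lam₁) (hlam₂ : 0 ≤ lam₂)
    (V : ℕ → ℝ) (hV : Monotone V) (hV0 : V 0 = 0)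
    (r : ℕ → ℝ) (hr : ∀ s, r s = if s = 0 then 1 - r₀ else r₁)
    (V0 V1 V2 Vnext : ℕ → ℝ)
    (hV0def : ∀ s, V0 s = (s : ℝ) + r s * V (s + 1) + (1 - r s) * V 0)
    (hV1def : ∀ s, V1 s = (s : ℝ) + lam₁ + (1 - ρ * p) * r s * V (s + 1)
        + ((1 - ρ * p) * (1 - r s) + ρ * p) * V 0)
    (hV2def : ∀ s, V2 s = (s : ℝ) + lam₂ + (1 - ρ * q) * r s * V (s + 1)
        + ((1 - ρ * q) * (1 - r s) + ρ * q) * V 0)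
    (hVnext : ∀ s, Vnext s = min (V0 s) (min (V1 s) (V2 s))) :
    Monotone Vnext := by
  have hVpos : ∀ n, 0 ≤ V n := fun n => hV0 ▸ hV (Nat.zero_le n)
  have hrnn : ∀ s, 0 ≤ r s := by
    intro s; rw [hr s]; split <;> [linarith [hr₀.2]; exact hr₁.1]
  have hrle : ∀ s, r s ≤ r (s + 1) := by
    intro s
    rw [hr s, hr (s + 1)]
    simp only [Nat.succ_ne_zero, if_false]
    split <;> [linarith; exact le_rfl]
  have key : ∀ (c : ℝ), 0 ≤ c → ∀ s : ℕ,
      c * r s * V (s + 1) ≤ c * r (s + 1) * V (s + 1 + 1) := by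
    intro c hc s
    have h1 : c * r s * V (s + 1) ≤ c * r (s + 1) * V (s + 1) := by
      apply mul_le_mul_of_nonneg_right _ (hVpos _)
      exact mul_le_mul_of_nonneg_left (hrle s) hc
    have h2 : c * r (s + 1) * V (s + 1) ≤ c * r (s + 1) * V (s + 1 + 1) := by
      apply mul_le_mul_of_nonneg_left (hV (Nat.le_succ _))
      exact mul_nonneg hc (hrnn _)
    linarith
  have hcp : 0 ≤ 1 - ρ * p := by
    nlinarith [hρ.1, hρ.2, hp.1, hp.2]
  have hcq : 0 ≤ 1 - ρ * q := by
    nlinarith [hρ.1, hρ.2, hq.1, hq.2]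
  apply monotone_nat_of_le_succ
  intro s
  rw [hVnext s, hVnext (s + 1)]
  have hs : (s : ℝ) ≤ ((s + 1 : ℕ) : ℝ) := by push_cast; linarith
  have h0 : V0 s ≤ V0 (s + 1) := by
    rw [hV0def s, hV0def (s + 1), hV0]
    have := key 1 zero_le_one s
    simp only [one_mul] at this
    linarith
  have h1 : V1 s ≤ V1 (s + 1) := by
    rw [hV1def s, hV1def (s + 1), hV0]
    have := key (1 - ρ * p) hcp s
    linarith
  have h2 : V2 s ≤ V2 (s + 1) := by
    rw [hV2def s, hV2def (s + 1), hV0]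
    have := key (1 - ρ * q) hcq s
    linarith
  exact min_le_min h0 (min_le_min h1 h2)
end

section
/- For any t, the value function V_t : ℕ → ℝ obtained by iterating V_{t+1}(s) = min{V_t^0(s), V_t^1(s), V_t^2(s)} starting from V₀ = 0 is monotone increasing in s, for all t ∈ ℕ, under the assumptions r₀, r₁, ρ, p, q ∈ [0,1], r₀ + r₁ ≥ 1, λ₁, λ₂ ≥ 0. -/
/-- Every iterate of the AoSI relative value iteration, starting from 0, is monotone. -/
theorem aosi_value_iteration_monotone
    (r₀ r₁ ρ p q lam₁ lam₂ : ℝ)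
    (hr₀ : r₀ ∈ Set.Icc (0:ℝ) 1) (hr₁ : r₁ ∈ Set.Icc (0:ℝ) 1)
    (hρ : ρ ∈ Set.Icc (0:ℝ) 1) (hp : p ∈ Set.Icc (0:ℝ) 1) (hq : q ∈ Set.Icc (0:ℝ) 1)
    (hsum : 1 ≤ r₀ + r₁) (hlam₁ : 0 ≤ lam₁) (hlam₂ : 0 ≤ lam₂)
    (r : ℕ → ℝ) (hr : ∀ s, r s = if s = 0 then 1 - r₀ else r₁)
    (V : ℕ → ℕ → ℝ)
    (hV0 : ∀ s, V 0 s = 0)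
    (hstep : ∀ t s, V (t + 1) s =
      min ((s : ℝ) + r s * V t (s + 1) + (1 - r s) * V t 0)
        (min ((s : ℝ) + lam₁ + (1 - ρ * p) * r s * V t (s + 1)
            + ((1 - ρ * p) * (1 - r s) + ρ * p) * V t 0)
          ((s : ℝ) + lam₂ + (1 - ρ * q) * r s * V t (s + 1)
            + ((1 - ρ * q) * (1 - r s) + ρ * q) * V t 0))) :
    ∀ t, Monotone (V t) := by
  obtain ⟨hr₀0, hr₀1⟩ := hr₀
  obtain ⟨hr₁0, hr₁1⟩ := hr₁
  obtain ⟨hρ0, hρ1⟩ := hρ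
  obtain ⟨hp0, hp1⟩ := hp
  obtain ⟨hq0, hq1⟩ := hq
  intro t
  induction t with
  | zero =>
    intro a b _
    simp [hV0]
  | succ t ih =>
    -- key: g s := r s * V t (s+1) + (1 - r s) * V t 0 is monotone in s
    have hg : ∀ s : ℕ, r s * V t (s + 1) + (1 - r s) * V t 0 ≤
        r (s + 1) * V t (s + 1 + 1) + (1 - r (s + 1)) * V t 0 := by
      intro s
      cases s with
      | zero =>
        rw [hr 0, hr 1]
        norm_num
        have h02 : V t 0 ≤ V t 2 := ih (by norm_num)
        have h12 : V t 1 ≤ V t 2 := ih (by norm_num)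
        nlinarith [mul_nonneg (by linarith : (0:ℝ) ≤ r₀ + r₁ - 1) (by linarith : (0:ℝ) ≤ V t 2 - V t 0),
          mul_nonneg (by linarith : (0:ℝ) ≤ 1 - r₀) (by linarith : (0:ℝ) ≤ V t 2 - V t 1)]
      | succ n =>
        rw [hr (n+1), hr (n+2)]
        simp only [if_neg (Nat.succ_ne_zero n), if_neg (Nat.succ_ne_zero (n+1))]
        have h : V t (n + 1 + 1) ≤ V t (n + 2 + 1) := ih (by omega)
        nlinarith [mul_nonneg hr₁0 (by linarith : (0:ℝ) ≤ V t (n + 2 + 1) - V t (n + 1 + 1))]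
    apply monotone_nat_of_le_succ
    intro s
    rw [hstep t s, hstep t (s + 1)]
    have hcast : (s : ℝ) + 1 = ((s + 1 : ℕ) : ℝ) := by push_cast; ring
    refine min_le_min ?_ (min_le_min ?_ ?_)
    · nlinarith [hg s]
    · have hc0 : (0:ℝ) ≤ 1 - ρ * p := by nlinarith
      nlinarith [mul_le_mul_of_nonneg_left (hg s) hc0]
    · have hc0 : (0:ℝ) ≤ 1 - ρ * q := by nlinarith
      nlinarith [mul_le_mul_of_nonneg_left (hg s) hc0]
end

section
/- Consider the optimal policy δ*(s) = argmin over δ ∈ {0,1,2} of V^δ(s) for the AoSI Bellman equation, where V is monotone increasing, q > p, λ₂ > λ₁ ≥ 0, ρ, r₁ ∈ (0,1]. Then the policy is multi-threshold: there exist n₁ ≤ n₂ in ℕ ∪ {∞} such that δ*(s) = 0 for s < n₁, δ*(s) = 1 for n₁ ≤ s < n₂, and δ*(s) = 2 for s ≥ n₂. -/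
/-- The optimal policy for the AoSI Bellman equation is multi-threshold: idle below n₁,
transmit compressed between n₁ and n₂, transmit uncompressed from n₂ onward. -/
theorem aosi_optimal_policy_multithreshold
    (lam₁ lam₂ ρ p q r₁ : ℝ)
    (hq : p < q) (hlam₁ : 0 ≤ lam₁) (hlam : lam₁ < lam₂)
    (hρ : ρ ∈ Set.Ioc (0:ℝ) 1) (hr₁ : r₁ ∈ Set.Ioc (0:ℝ) 1)
    (V : ℕ → ℝ) (hV : Monotone V)
    (V0 V1 V2 : ℕ → ℝ)
    (hV0 : ∀ s, V0 s = (s : ℝ) + r₁ * V (s + 1) + (1 - r₁) * V 0)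
    (hV1 : ∀ s, V1 s = (s : ℝ) + lam₁ + (1 - ρ * p) * r₁ * V (s + 1)
        + ((1 - ρ * p) * (1 - r₁) + ρ * p) * V 0)
    (hV2 : ∀ s, V2 s = (s : ℝ) + lam₂ + (1 - ρ * q) * r₁ * V (s + 1)
        + ((1 - ρ * q) * (1 - r₁) + ρ * q) * V 0)
    (δstar : ℕ → ℕ)
    (hδ : ∀ s, δstar s =
      if V0 s ≤ V1 s ∧ V0 s ≤ V2 s then 0 else if V1 s ≤ V2 s then 1 else 2) :
    ∃ n₁ n₂ : ℕ∞, n₁ ≤ n₂ ∧ ∀ s : ℕ,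
      ((s : ℕ∞) < n₁ → δstar s = 0) ∧
      (n₁ ≤ (s : ℕ∞) ∧ (s : ℕ∞) < n₂ → δstar s = 1) ∧
      (n₂ ≤ (s : ℕ∞) → δstar s = 2) := by
  classical
  obtain ⟨hρ0, _⟩ := hρ
  obtain ⟨hr0, _⟩ := hr₁
  have hD0 : ∀ s : ℕ, 0 ≤ V (s + 1) - V 0 := fun s =>
    sub_nonneg.2 (hV (Nat.zero_le _))
  have hDm : ∀ s t : ℕ, s ≤ t → V (s + 1) - V 0 ≤ V (t + 1) - V 0 := fun s t h =>
    sub_le_sub_right (hV (by omega)) _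
  have k1 : ∀ s : ℕ, V1 s - V0 s = lam₁ - ρ * p * r₁ * (V (s + 1) - V 0) := fun s => by
    rw [hV0, hV1]; ring
  have k2 : ∀ s : ℕ, V2 s - V0 s = lam₂ - ρ * q * r₁ * (V (s + 1) - V 0) := fun s => by
    rw [hV0, hV2]; ring
  have k3 : ∀ s : ℕ, V2 s - V1 s = (lam₂ - lam₁) - ρ * (q - p) * r₁ * (V (s + 1) - V 0) :=
    fun s => by rw [hV1, hV2]; ring
  -- a general downward-closedness fact
  have key : ∀ (c lam : ℝ), 0 ≤ lam → ∀ s t : ℕ, s ≤ t →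
      c * (V (t + 1) - V 0) ≤ lam → c * (V (s + 1) - V 0) ≤ lam := by
    intro c lam hlam' s t hst h
    rcases le_or_gt c 0 with hc | hc
    · exact le_trans (mul_nonpos_of_nonpos_of_nonneg hc (hD0 s)) hlam'
    · exact le_trans (mul_le_mul_of_nonneg_left (hDm s t hst) hc.le) h
  have downA : ∀ s t : ℕ, s ≤ t → (V0 t ≤ V1 t ∧ V0 t ≤ V2 t) →
      (V0 s ≤ V1 s ∧ V0 s ≤ V2 s) := by
    intro s t hst ⟨h1, h2⟩
    have e1 := k1 s; have e1' := k1 t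
    have e2 := k2 s; have e2' := k2 t
    constructor
    · have := key (ρ * p * r₁) lam₁ hlam₁ s t hst (by linarith)
      linarith
    · have := key (ρ * q * r₁) lam₂ (le_trans hlam₁ hlam.le) s t hst (by linarith)
      linarith
  have downB : ∀ s t : ℕ, s ≤ t → V1 t ≤ V2 t → V1 s ≤ V2 s := by
    intro s t hst h
    have e3 := k3 s; have e3' := k3 t
    have := key (ρ * (q - p) * r₁) (lam₂ - lam₁) (by linarith) s t hst (by linarith)
    linarith
  -- characterizations of δstar
  have d0 : ∀ s, δstar s = 0 ↔ (V0 s ≤ V1 s ∧ V0 s ≤ V2 s) := by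
    intro s; rw [hδ s]; split_ifs with h1 h2 <;> simp [h1]
  have d2 : ∀ s, δstar s = 2 ↔ (¬(V0 s ≤ V1 s ∧ V0 s ≤ V2 s) ∧ ¬(V1 s ≤ V2 s)) := by
    intro s; rw [hδ s]; split_ifs with h1 h2
    · simp [h1]
    · simp [h1, h2]
    · simp [h1, h2]
  -- thresholds
  refine ⟨if h : ∃ s, δstar s ≠ 0 then (Nat.find h : ℕ∞) else ⊤,
          if h : ∃ s, δstar s = 2 then (Nat.find h : ℕ∞) else ⊤, ?_, ?_⟩
  · split_ifs with h1 h2 h2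
    · -- both exist : find h1 ≤ find h2
      have : Nat.find h1 ≤ Nat.find h2 := Nat.find_le (by
        have := Nat.find_spec h2; omega)
      exact_mod_cast this
    · exact le_top
    · exact absurd ⟨Nat.find h2, by have := Nat.find_spec h2; omega⟩ h1
    · exact le_top
  · intro s
    refine ⟨?_, ?_, ?_⟩
    · -- s < n₁ → δ s = 0
      intro hs
      split_ifs at hs with h1
      · have hlt : s < Nat.find h1 := by exact_mod_cast hs
        have := Nat.find_min h1 hlt
        omega
      · by_contra hne
        exact h1 ⟨s, hne⟩
    · -- n₁ ≤ s < n₂ → δ s = 1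
      rintro ⟨hs1, hs2⟩
      split_ifs at hs1 with h1
      · have hfind : Nat.find h1 ≤ s := by exact_mod_cast hs1
        -- δ (find h1) ≠ 0, so ¬P0 at find h1, hence ¬P0 at s
        have hnP0 : ¬(V0 s ≤ V1 s ∧ V0 s ≤ V2 s) := by
          intro hP0
          exact Nat.find_spec h1 ((d0 _).2 (downA _ s hfind hP0))
        -- δ s ≠ 2
        have hne2 : δstar s ≠ 2 := by
          split_ifs at hs2 with h2
          · have hlt : s < Nat.find h2 := by exact_mod_cast hs2
            exact Nat.find_min h2 hlt
          · intro hc; exact h2 ⟨s, hc⟩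
        by_cases hb : V1 s ≤ V2 s
        · rw [hδ s, if_neg hnP0, if_pos hb]
        · exact absurd ((d2 s).2 ⟨hnP0, hb⟩) hne2
      · exact absurd hs1 (by simp)
    · -- n₂ ≤ s → δ s = 2
      intro hs
      split_ifs at hs with h2
      · have hfind : Nat.find h2 ≤ s := by exact_mod_cast hs
        have hspec := (d2 _).1 (Nat.find_spec h2)
        refine (d2 s).2 ⟨?_, ?_⟩
        · intro hP0; exact hspec.1 (downA _ s hfind hP0)
        · intro hP1; exact hspec.2 (downB _ s hfind hP1)
      · exact absurd hs (by simp)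
end

section
/- Let 0 ≤ a, b, c < 1, d > 0, and n₁, n₂ ∈ ℕ with 0 < n₁ ≤ n₂. Define u : ℕ → ℝ by u(0) = u₀, u(i) = d·a^{i-1}·u₀ for 1 ≤ i ≤ n₁, u(i) = d·a^{n₁-1}·b^{i-n₁}·u₀ for n₁ < i ≤ n₂, u(i) = d·a^{n₁-1}·b^{n₂-n₁}·c^{i-n₂}·u₀ for i > n₂, where u₀ = (1-a)(1-b)(1-c) / [(1-a+d)(1-c)(1-b) + (1-c)(b-a)·d·a^{n₁-1} + d(1-a)(c-b)·b^{n₂-n₁}·a^{n₁-1}]. Then ∑_{i=0}^∞ u(i) = 1. -/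
/-- Normalization of the stationary distribution of the AoSI chain under a multi-threshold
policy with 0 < n₁ ≤ n₂. -/
theorem aosi_stationary_normalization_pos_thresholds
    (a b c d : ℝ) (ha : 0 ≤ a) (ha' : a < 1) (hb : 0 ≤ b) (hb' : b < 1)
    (hc : 0 ≤ c) (hc' : c < 1) (hd : 0 < d)
    (n₁ n₂ : ℕ) (hn₁ : 0 < n₁) (hn : n₁ ≤ n₂)
    (u₀ : ℝ)
    (hden : 0 < (1 - a + d) * (1 - c) * (1 - b) + (1 - c) * (b - a) * d * a ^ (n₁ - 1)
        + d * (1 - a) * (c - b) * b ^ (n₂ - n₁) * a ^ (n₁ - 1))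
    (hu₀ : u₀ = (1 - a) * (1 - b) * (1 - c) /
        ((1 - a + d) * (1 - c) * (1 - b) + (1 - c) * (b - a) * d * a ^ (n₁ - 1)
          + d * (1 - a) * (c - b) * b ^ (n₂ - n₁) * a ^ (n₁ - 1)))
    (u : ℕ → ℝ)
    (hu : ∀ i, u i =
      if i = 0 then u₀
      else if i ≤ n₁ then d * a ^ (i - 1) * u₀
      else if i ≤ n₂ then d * a ^ (n₁ - 1) * b ^ (i - n₁) * u₀
      else d * a ^ (n₁ - 1) * b ^ (n₂ - n₁) * c ^ (i - n₂) * u₀) :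
    ∑' i : ℕ, u i = 1 := by
  obtain ⟨m₁, rfl⟩ : ∃ m, n₁ = m + 1 := ⟨n₁ - 1, by omega⟩
  obtain ⟨m₂, rfl⟩ : ∃ m, n₂ = (m₁ + 1) + m := ⟨n₂ - (m₁ + 1), by omega⟩
  simp only [Nat.add_sub_cancel, Nat.add_sub_cancel_left] at hden hu₀ hu ⊢
  set n₂ := m₁ + 1 + m₂ with hn₂def
  -- tail
  have htail : ∀ k : ℕ, u (k + (n₂ + 1)) =
      (d * a ^ m₁ * b ^ m₂ * u₀ * c) * c ^ k := by
    intro k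
    rw [hu]
    have h0 : ¬ (k + (n₂ + 1) = 0) := by omega
    have h1 : ¬ (k + (n₂ + 1) ≤ m₁ + 1) := by omega
    have h2 : ¬ (k + (n₂ + 1) ≤ n₂) := by omega
    have h3 : k + (n₂ + 1) - n₂ = k + 1 := by omega
    rw [if_neg h0, if_neg h1, if_neg h2, h3, pow_succ]
    ring
  have hsum_tail : Summable (fun k => u (k + (n₂ + 1))) := by
    simp only [htail]
    exact (summable_geometric_of_lt_one hc hc').mul_left _
  have hsumm : Summable u := (summable_nat_add_iff (n₂ + 1)).mp hsum_tail
  rw [← Summable.sum_add_tsum_nat_add (n₂ + 1) hsumm]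
  have htailval : ∑' k : ℕ, u (k + (n₂ + 1)) =
      d * a ^ m₁ * b ^ m₂ * u₀ * c * (1 - c)⁻¹ := by
    simp only [htail]
    rw [tsum_mul_left, tsum_geometric_of_lt_one hc hc']
  -- finite part
  have hfin : ∑ i ∈ Finset.range (n₂ + 1), u i =
      u₀ + d * u₀ * ((a ^ (m₁ + 1) - 1) / (a - 1))
        + d * a ^ m₁ * u₀ * (b * ((b ^ m₂ - 1) / (b - 1))) := by
    rw [Finset.range_eq_Ico,
      ← Finset.sum_Ico_consecutive u (by omega : 0 ≤ m₁ + 2) (by omega : m₁ + 2 ≤ n₂ + 1),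
      ← Finset.sum_Ico_consecutive u (by omega : 0 ≤ 1) (by omega : 1 ≤ m₁ + 2)]
    have hA : ∑ i ∈ Finset.Ico 0 1, u i = u₀ := by
      simp [hu]
    have hB : ∑ i ∈ Finset.Ico 1 (m₁ + 2), u i = d * u₀ * ((a ^ (m₁ + 1) - 1) / (a - 1)) := by
      rw [Finset.sum_Ico_eq_sum_range]
      have : ∀ j ∈ Finset.range (m₁ + 2 - 1), u (1 + j) = d * u₀ * a ^ j := by
        intro j hj
        rw [Finset.mem_range] at hj
        rw [hu]
        rw [if_neg (by omega), if_pos (by omega)]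
        have : 1 + j - 1 = j := by omega
        rw [this]; ring
      rw [Finset.sum_congr rfl this, ← Finset.mul_sum,
        geom_sum_eq (by intro h; rw [h] at ha'; exact lt_irrefl _ ha')]
      have : m₁ + 2 - 1 = m₁ + 1 := by omega
      rw [this]
    have hC : ∑ i ∈ Finset.Ico (m₁ + 2) (n₂ + 1), u i =
        d * a ^ m₁ * u₀ * (b * ((b ^ m₂ - 1) / (b - 1))) := by
      rw [Finset.sum_Ico_eq_sum_range]
      have he : n₂ + 1 - (m₁ + 2) = m₂ := by omega
      rw [he]
      have : ∀ j ∈ Finset.range m₂, u (m₁ + 2 + j) = (d * a ^ m₁ * u₀ * b) * b ^ j := by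
        intro j hj
        rw [Finset.mem_range] at hj
        rw [hu]
        rw [if_neg (by omega), if_neg (by omega), if_pos (by omega)]
        have : m₁ + 2 + j - (m₁ + 1) = j + 1 := by omega
        rw [this, pow_succ]; ring
      rw [Finset.sum_congr rfl this, ← Finset.mul_sum,
        geom_sum_eq (by intro h; rw [h] at hb'; exact lt_irrefl _ hb')]
      ring
    rw [hA, hB, hC]
  rw [hfin, htailval, hu₀, pow_succ]
  have hane : a - 1 ≠ 0 := by intro h; nlinarith
  have hbne : b - 1 ≠ 0 := by intro h; nlinarith
  have hcne : (1 : ℝ) - c ≠ 0 := by intro h; nlinarith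
  have hDne : (1 - a + d) * (1 - c) * (1 - b) + (1 - c) * (b - a) * d * a ^ m₁
      + d * (1 - a) * (c - b) * b ^ m₂ * a ^ m₁ ≠ 0 := ne_of_gt hden
  set A := a ^ m₁ with hA
  set B := b ^ m₂ with hB
  set D := (1 - a + d) * (1 - c) * (1 - b) + (1 - c) * (b - a) * d * A
      + d * (1 - a) * (c - b) * B * A with hD
  have key : (1 + d * ((A * a - 1) / (a - 1)) + d * A * (b * ((B - 1) / (b - 1)))
      + d * A * B * c * (1 - c)⁻¹) * ((1 - a) * (1 - b) * (1 - c)) = D := by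
    rw [hD]; field_simp; ring
  calc (1 - a) * (1 - b) * (1 - c) / D
        + d * ((1 - a) * (1 - b) * (1 - c) / D) * ((A * a - 1) / (a - 1))
        + d * A * ((1 - a) * (1 - b) * (1 - c) / D) * (b * ((B - 1) / (b - 1)))
        + d * A * B * ((1 - a) * (1 - b) * (1 - c) / D) * c * (1 - c)⁻¹
      = ((1 + d * ((A * a - 1) / (a - 1)) + d * A * (b * ((B - 1) / (b - 1)))
          + d * A * B * c * (1 - c)⁻¹) * ((1 - a) * (1 - b) * (1 - c))) / D := by
        ring
    _ = D / D := by rw [key]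
    _ = 1 := div_self hDne
end

section
/- Let 0 ≤ a, b, c < 1, d ≥ 0, and 0 < n₁ ≤ n₂. Let u be the stationary distribution of the birth-and-reset Markov chain on ℕ with transition probabilities: from state 0, go to 1 with probability d and to 0 with probability 1-d; from state i with 1 ≤ i < n₁, go to i+1 with probability a, else reset to 0; from state i with n₁ ≤ i < n₂, go to i+1 with probability b, else reset to 0; from state i ≥ n₂, go to i+1 with probability c, else reset to 0. Then u satisfies u(i) = d·a^{i-1}·u(0) for 1 ≤ i ≤ n₁, u(i) = d·a^{n₁-1}·b^{i-n₁}·u(0) for n₁ < i ≤ n₂, and u(i) = d·a^{n₁-1}·b^{n₂-n₁}·c^{i-n₂}·u(0) for i > n₂. -/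
/-- The stationary distribution of the birth-and-reset AoSI chain under a multi-threshold
policy has the stated geometric piecewise form. -/
theorem aosi_stationary_distribution_form
    (a b c d : ℝ) (ha : 0 ≤ a) (ha' : a < 1) (hb : 0 ≤ b) (hb' : b < 1)
    (hc : 0 ≤ c) (hc' : c < 1) (hd : 0 ≤ d)
    (n₁ n₂ : ℕ) (hn₁ : 0 < n₁) (hn : n₁ ≤ n₂)
    (step : ℕ → ℝ)
    (hstep : ∀ j, step j = if j = 0 then d else if j < n₁ then a else if j < n₂ then b else c)
    (P : ℕ → ℕ → ℝ)
    (hP : ∀ j k, P j k = if k = j + 1 then step j else if k = 0 then 1 - step j else 0)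
    (u : ℕ → ℝ) (hu_nonneg : ∀ i, 0 ≤ u i)
    (hbalance : ∀ i, u i = ∑' j : ℕ, P j i * u j)
    (hsum : ∑' i : ℕ, u i = 1) :
    ∀ i : ℕ,
      (1 ≤ i → i ≤ n₁ → u i = d * a ^ (i - 1) * u 0) ∧
      (n₁ < i → i ≤ n₂ → u i = d * a ^ (n₁ - 1) * b ^ (i - n₁) * u 0) ∧
      (n₂ < i → u i = d * a ^ (n₁ - 1) * b ^ (n₂ - n₁) * c ^ (i - n₂) * u 0) := by
  have key : ∀ i, u (i + 1) = step i * u i := by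
    intro i
    rw [hbalance (i + 1), tsum_eq_single i]
    · rw [hP]; simp
    · intro j hj
      have h1 : ¬ (i + 1 = j + 1) := by omega
      rw [hP]
      simp [h1, Ne.symm hj]
  have h1 : ∀ i, 1 ≤ i → i ≤ n₁ → u i = d * a ^ (i - 1) * u 0 := by
    intro i
    induction i with
    | zero => omega
    | succ i ih =>
      intro _ hle
      rcases Nat.eq_zero_or_pos i with h0 | hpos
      · subst h0
        rw [key 0, hstep]
        simp
      · have hiu := ih hpos (by omega)
        have hstepi : step i = a := by
          rw [hstep]; rw [if_neg (by omega), if_pos (by omega)]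
        have : i - 1 + 1 = i := by omega
        have e : i + 1 - 1 = i - 1 + 1 := by omega
        rw [key i, hstepi, hiu, e, pow_succ]
        ring
  have h2 : ∀ i, n₁ < i → i ≤ n₂ → u i = d * a ^ (n₁ - 1) * b ^ (i - n₁) * u 0 := by
    intro i
    induction i with
    | zero => omega
    | succ i ih =>
      intro hlt hle
      rcases Nat.lt_or_ge n₁ i with hni | hni
      · have hiu := ih hni (by omega)
        have hstepi : step i = b := by
          rw [hstep]; rw [if_neg (by omega), if_neg (by omega), if_pos (by omega)]
        have he : i - n₁ + 1 = i + 1 - n₁ := by omega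
        rw [key i, hstepi, hiu, ← he, pow_succ]
        ring
      · have hin : i = n₁ := by omega
        subst hin
        have hiu := h1 i hn₁ le_rfl
        have hstepi : step i = b := by
          rw [hstep]; rw [if_neg (by omega), if_neg (by omega), if_pos (by omega)]
        have he : i + 1 - i = 1 := by omega
        rw [key i, hstepi, hiu, he]
        ring
  have hun₂ : u n₂ = d * a ^ (n₁ - 1) * b ^ (n₂ - n₁) * u 0 := by
    rcases eq_or_lt_of_le hn with h | h
    · subst h
      have := h1 n₁ hn₁ le_rfl
      simp [this, Nat.sub_self]
    · exact h2 n₂ h le_rfl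
  have h3 : ∀ i, n₂ < i → u i = d * a ^ (n₁ - 1) * b ^ (n₂ - n₁) * c ^ (i - n₂) * u 0 := by
    intro i
    induction i with
    | zero => omega
    | succ i ih =>
      intro hlt
      rcases Nat.lt_or_ge n₂ i with hni | hni
      · have hiu := ih hni
        have hstepi : step i = c := by
          rw [hstep]; rw [if_neg (by omega), if_neg (by omega), if_neg (by omega)]
        have he : i - n₂ + 1 = i + 1 - n₂ := by omega
        rw [key i, hstepi, hiu, ← he, pow_succ]
        ring
      · have hin : i = n₂ := by omega
        subst hin
        have hstepi : step i = c := by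
          rw [hstep]; rw [if_neg (by omega), if_neg (by omega), if_neg (by omega)]
        have he : i + 1 - i = 1 := by omega
        rw [key i, hstepi, hun₂, he]
        ring
  exact fun i => ⟨h1 i, h2 i, h3 i⟩
end

section
/- Let 0 ≤ b, c < 1, e ≥ 0, n₂ > 0, and define u(0) = (1-b)(1-c)/[(1-b+e)(1-c) + (c-b)·e·b^{n₂-1}], u(i) = e·b^{i-1}·u(0) for 1 ≤ i ≤ n₂, and u(i) = e·b^{n₂-1}·c^{i-n₂}·u(0) for i > n₂. Then ∑_{i=0}^∞ u(i) = 1. -/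
/-- Normalization of the stationary distribution of the AoSI chain under a multi-threshold
policy with n₁ = 0 < n₂. -/
theorem aosi_stationary_normalization_n1_zero
    (b c e : ℝ) (hb : 0 ≤ b) (hb' : b < 1) (hc : 0 ≤ c) (hc' : c < 1) (he : 0 ≤ e)
    (n₂ : ℕ) (hn₂ : 0 < n₂)
    (hden : 0 < (1 - b + e) * (1 - c) + (c - b) * e * b ^ (n₂ - 1))
    (u : ℕ → ℝ)
    (hu : ∀ i, u i =
      if i = 0 then (1 - b) * (1 - c) / ((1 - b + e) * (1 - c) + (c - b) * e * b ^ (n₂ - 1))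
      else if i ≤ n₂ then e * b ^ (i - 1) * u 0
      else e * b ^ (n₂ - 1) * c ^ (i - n₂) * u 0) :
    ∑' i : ℕ, u i = 1 := by
  obtain ⟨m, rfl⟩ : ∃ m, n₂ = m + 1 := ⟨n₂ - 1, (Nat.succ_pred_eq_of_pos hn₂).symm⟩
  simp only [Nat.add_sub_cancel] at hden hu ⊢
  have hu0 : u 0 = (1 - b) * (1 - c) / ((1 - b + e) * (1 - c) + (c - b) * e * b ^ m) := by
    simpa using hu 0
  -- tail terms
  have htail : ∀ i, u (i + (m + 2)) = (e * b ^ m * c * u 0) * c ^ i := by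
    intro i
    rw [hu (i + (m + 2))]
    have h1 : i + (m + 2) ≠ 0 := by omega
    have h2 : ¬ (i + (m + 2) ≤ m + 1) := by omega
    have h3 : i + (m + 2) - (m + 1) = i + 1 := by omega
    simp [h1, h2, h3, pow_succ]
    ring
  have hsum_tail : Summable (fun i => u (i + (m + 2))) := by
    rw [funext htail]
    exact (summable_geometric_of_lt_one hc hc').mul_left _
  have hsum : Summable u := (summable_nat_add_iff (m + 2)).mp hsum_tail
  have hsplit := Summable.sum_add_tsum_nat_add (m + 2) hsum
  rw [← hsplit]
  have htailval : ∑' i, u (i + (m + 2)) = (e * b ^ m * c * u 0) * (1 - c)⁻¹ := by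
    rw [funext htail, tsum_mul_left, tsum_geometric_of_lt_one hc hc']
  have hfin : ∑ i ∈ Finset.range (m + 2), u i
      = u 0 + e * u 0 * ((b ^ (m + 1) - 1) / (b - 1)) := by
    rw [Finset.sum_range_succ']
    have : ∀ i ∈ Finset.range (m + 1), u (i + 1) = (e * u 0) * b ^ i := by
      intro i hi
      rw [hu (i + 1)]
      have h1 : i + 1 ≠ 0 := by omega
      have h2 : i + 1 ≤ m + 1 := by have := Finset.mem_range.mp hi; omega
      simp [h1, h2]
      ring
    rw [Finset.sum_congr rfl this, ← Finset.mul_sum, geom_sum_eq hb'.ne]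
    ring
  rw [hfin, htailval, hu0]
  have hbne : b - 1 ≠ 0 := by linarith
  have hcne : 1 - c ≠ 0 := by linarith
  have hDne : (1 - b + e) * (1 - c) + (c - b) * e * b ^ m ≠ 0 := ne_of_gt hden
  generalize hD : (1 - b + e) * (1 - c) + (c - b) * e * b ^ m = D at hDne ⊢
  field_simp
  subst hD
  ring
end

section
/- Let V : ℕ → ℝ be monotone increasing, r₀ + r₁ ≥ 1 with r₀, r₁ ∈ [0,1]. Define V^0(s) = s + r(s)·V(s+1) + (1-r(s))·V(0) with r(0) = 1-r₀ and r(s) = r₁ for s > 0. Then V^0(1) - V^0(0) ≥ 1 + (r₀ + r₁ - 1)(V(1) - V(0)) ≥ 0, i.e., V^0 is increasing at 0. -/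
/-- Boundary step of the monotonicity induction: V⁰ is increasing at 0. -/
theorem aosi_idle_value_increasing_at_zero
    (r₀ r₁ : ℝ) (hr₀ : r₀ ∈ Set.Icc (0:ℝ) 1) (hr₁ : r₁ ∈ Set.Icc (0:ℝ) 1)
    (hsum : 1 ≤ r₀ + r₁)
    (V : ℕ → ℝ) (hV : Monotone V)
    (r : ℕ → ℝ) (hr0 : r 0 = 1 - r₀) (hrpos : ∀ s, 0 < s → r s = r₁)
    (V0 : ℕ → ℝ)
    (hV0 : ∀ s, V0 s = (s : ℝ) + r s * V (s + 1) + (1 - r s) * V 0) :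
    V0 1 - V0 0 ≥ 1 + (r₀ + r₁ - 1) * (V 1 - V 0) ∧
    1 + (r₀ + r₁ - 1) * (V 1 - V 0) ≥ 0 := by
  have h12 : V 1 ≤ V 2 := hV (by norm_num)
  have h01 : V 0 ≤ V 1 := hV (by norm_num)
  have e1 := hV0 1
  have e0 := hV0 0
  rw [hrpos 1 (by norm_num)] at e1
  rw [hr0] at e0
  constructor
  · rw [e1, e0]
    push_cast
    nlinarith [hr₁.1, hr₁.2]
  · nlinarith
end
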